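/- Let σ₀ be the cyclic permutation (1 2 … n) of {1,…,n}, and for any permutation σ define ↗(σ) = #{i : σ(i) > i}. Then for every permutation σ of {1,…,n}, ↗(σ) = ↗(σ₀ σ σ₀⁻¹). -/

import Mathlib

lemma fin_add_one_eq_zero_iff {m : ℕ} (a : Fin (m+1)) : a + 1 = 0 ↔ a = Fin.last m := by
  constructor
  · intro h
    by_contra hne
    have := Fin.val_add_one a
    rw [if_neg hne, h] at this
    simp at this
  · rintro rfl
    exact Fin.last_add_one m

lemma fin_rot_lt {m : ℕ} (a b : Fin (m+1)) (ha : a ≠ Fin.last m) (hb : b ≠ Fin.last m) :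
    a + 1 < b + 1 ↔ a < b := by
  rw [Fin.lt_def, Fin.lt_def, Fin.val_add_one, Fin.val_add_one, if_neg ha, if_neg hb]
  omega

/-- The count `↗(σ) = #{i : σ(i) > i}` is invariant under conjugation by the
cyclic permutation `σ₀ = (1 2 … n)` (here `finRotate n : i ↦ i + 1 mod n`). -/
theorem upCount_conj_finRotate (n : ℕ) (σ : Equiv.Perm (Fin n)) :
    (Finset.univ.filter fun i : Fin n => σ i > i).card
      = (Finset.univ.filter fun i : Fin n =>
          (finRotate n * σ * (finRotate n)⁻¹) i > i).card := by
  cases n with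
  | zero => simp
  | succ m =>
    set τ : Equiv.Perm (Fin (m+1)) := finRotate (m+1) * σ * (finRotate (m+1))⁻¹ with hτ
    have hinv : ∀ j : Fin (m+1), (finRotate (m+1))⁻¹ (j + 1) = j := by
      intro j
      rw [← finRotate_succ_apply, Equiv.Perm.inv_def, Equiv.symm_apply_apply]
    have hτ1 : ∀ j : Fin (m+1), τ (j + 1) = σ j + 1 := by
      intro j
      simp only [hτ, Equiv.Perm.mul_apply, hinv, finRotate_succ_apply]
    have hτ0 : τ 0 = σ (Fin.last m) + 1 := by
      have : (Fin.last m : Fin (m+1)) + 1 = 0 := Fin.last_add_one m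
      rw [← this, hτ1]
    apply Finset.card_bij
      (fun j _ => if σ j = Fin.last m then (0 : Fin (m+1)) else j + 1)
    · intro j hj
      simp only [Finset.mem_filter, Finset.mem_univ, true_and] at hj ⊢
      by_cases h : σ j = Fin.last m
      · rw [if_pos h, hτ0]
        have hjne : j ≠ Fin.last m := by
          intro e; rw [h, e] at hj; exact lt_irrefl _ hj
        have hσl : σ (Fin.last m) ≠ Fin.last m := by
          intro e
          exact hjne (σ.injective (h.trans e.symm))
        rw [gt_iff_lt, Fin.pos_iff_ne_zero]
        intro e
        exact hσl ((fin_add_one_eq_zero_iff _).mp e)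
      · rw [if_neg h, hτ1]
        have hjne : j ≠ Fin.last m := by
          intro e
          exact absurd hj (by rw [e]; exact not_lt.mpr (Fin.le_last _))
        exact (fin_rot_lt j (σ j) hjne h).mpr hj
    · intro j1 hj1 j2 hj2 heq
      simp only [Finset.mem_filter, Finset.mem_univ, true_and] at hj1 hj2
      have hne1 : j1 ≠ Fin.last m := fun e => by
        rw [e] at hj1; exact absurd hj1 (not_lt.mpr (Fin.le_last _))
      have hne2 : j2 ≠ Fin.last m := fun e => by
        rw [e] at hj2; exact absurd hj2 (not_lt.mpr (Fin.le_last _))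
      by_cases h1 : σ j1 = Fin.last m <;> by_cases h2 : σ j2 = Fin.last m <;>
        simp only [if_pos, if_neg, h1, h2, if_true, if_false] at heq
      · exact σ.injective (h1.trans h2.symm)
      · exact absurd heq.symm (fun e => hne2 ((fin_add_one_eq_zero_iff _).mp e))
      · exact absurd heq (fun e => hne1 ((fin_add_one_eq_zero_iff _).mp e))
      · exact add_right_cancel heq
    · intro i hi
      simp only [Finset.mem_filter, Finset.mem_univ, true_and] at hi
      by_cases h0 : i = 0
      · subst h0
        refine ⟨σ.symm (Fin.last m), ?_, ?_⟩
        · simp only [Finset.mem_filter, Finset.mem_univ, true_and,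
            Equiv.apply_symm_apply]
          rw [hτ0, gt_iff_lt, Fin.pos_iff_ne_zero] at hi
          have hσl : σ (Fin.last m) ≠ Fin.last m := by
            intro e
            exact hi ((fin_add_one_eq_zero_iff _).mpr e)
          have : σ.symm (Fin.last m) ≠ Fin.last m := by
            intro e
            apply hσl
            conv_lhs => rw [← e]
            exact σ.apply_symm_apply _
          exact lt_of_le_of_ne (Fin.le_last _) this
        · simp [Equiv.apply_symm_apply]
      · obtain ⟨j, rfl⟩ : ∃ j : Fin (m+1), j + 1 = i := by
          refine ⟨i - 1, ?_⟩
          simp [sub_add_cancel]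
        have hjne : j ≠ Fin.last m := by
          intro e
          rw [e, Fin.last_add_one] at h0
          exact h0 rfl
        rw [hτ1] at hi
        have hσne : σ j ≠ Fin.last m := by
          intro e
          rw [e, Fin.last_add_one] at hi
          exact absurd hi (by simp [Fin.lt_def])
        refine ⟨j, ?_, ?_⟩
        · simp only [Finset.mem_filter, Finset.mem_univ, true_and]
          exact (fin_rot_lt j (σ j) hjne hσne).mp hi
        · rw [if_neg hσne]
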